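/- Let p be a prime, a and n positive integers, r an integer, and j a non-negative integer. Then the sum over all integers k with 0 ≤ k ≤ n and k ≡ r (mod p^a) of (-1)^(n-k) · C(n,k) · C((k-r)/p^a, j) is divisible by p^[(n - p^(a-1) - j·p^a)/(p^(a-1)(p-1))]. -/

import Mathlib

open Finset Polynomial

/-- Coefficients of `(X-1)^n` in the `ℤ[t]`-basis `(X-1)^b`, `0 ≤ b < q`, where
`t = X^q - 1`. -/
def cc (q : ℕ) : ℕ → ℕ → ℕ → ℤ
  | 0, b, j => if b = 0 ∧ j = 0 then 1 else 0
  | n+1, 0, 0 => 0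
  | n+1, 0, j+1 => cc q n (q-1) j
  | n+1, b+1, j => cc q n b j - (q.choose (b+1) : ℤ) * cc q n (q-1) j

lemma cc_eq_zero (q : ℕ) : ∀ n b j, n < j → cc q n b j = 0 := by
  intro n
  induction n with
  | zero => intro b j h; simp [cc]; omega
  | succ n ih =>
    intro b j h
    match b, j with
    | 0, 0 => simp [cc]
    | 0, j+1 => simpa [cc] using ih (q-1) j (by omega)
    | b+1, j => simp [cc, ih b j (by omega), ih (q-1) j (by omega)]

/-- Kummer-type bound: `p^(a - v_p(b)) ∣ C(p^a, b)` for `0 < b < p^a`. -/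
lemma kummer_dvd (p : ℕ) (hp : p.Prime) (a b : ℕ) (hb : 0 < b) (hbq : b < p ^ a) :
    p ^ (a - b.factorization p) ∣ (p ^ a).choose b := by
  set e := b.factorization p with he
  set b' := b / p ^ e with hb'def
  have hpe : p ^ e ∣ b := Nat.ordProj_dvd b p
  have hb' : b = p ^ e * b' := by rw [hb'def, Nat.mul_div_cancel' hpe]
  have hb'pos : b' ≠ 0 := by
    intro h; rw [h, mul_zero] at hb'; omega
  have hcop : Nat.Coprime p b' := Nat.coprime_ordCompl hp (by omega)
  -- e ≤ a
  have hea : e ≤ a := by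
    by_contra h
    have h1 : p ^ a < p ^ e := Nat.pow_lt_pow_right hp.one_lt (by omega)
    have h2 : p ^ e ≤ b := Nat.le_of_dvd hb hpe
    omega
  obtain ⟨m, hm⟩ : p ^ a ∣ (p ^ a).choose b * b := by
    refine ⟨(p ^ a - 1).choose (b - 1), ?_⟩
    have := Nat.add_one_mul_choose_eq (p ^ a - 1) (b - 1)
    have hq1 : 0 < p ^ a := Nat.pow_pos hp.pos
    rw [show p ^ a - 1 + 1 = p ^ a by omega, show b - 1 + 1 = b by omega] at this
    omega
  have hmul : (p ^ a).choose b * b' * p ^ e = p ^ (a - e) * m * p ^ e := by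
    have : p ^ a = p ^ (a - e) * p ^ e := by rw [← pow_add]; congr 1; omega
    have hb2 : p ^ e * b' = b := hb'.symm
    calc (p ^ a).choose b * b' * p ^ e = (p ^ a).choose b * (p ^ e * b') := by ring
    _ = (p ^ a).choose b * b := by rw [hb2]
    _ = p ^ a * m := hm
    _ = p ^ (a - e) * m * p ^ e := by rw [this]; ring
  have hpe0 : 0 < p ^ e := Nat.pow_pos hp.pos
  have h3 : p ^ (a - e) ∣ (p ^ a).choose b * b' :=
    ⟨m, Nat.eq_of_mul_eq_mul_right hpe0 hmul⟩
  exact (Nat.Coprime.pow_left (a - e) hcop).dvd_of_dvd_mul_right h3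

/-- exponent function -/
def fexp (p a n b j : ℕ) : ℤ :=
  ((n : ℤ) - b - j * (p : ℤ) ^ a + (p : ℤ) ^ (a - 1) * ((p : ℤ) - 1) - 1) /
    ((p : ℤ) ^ (a - 1) * ((p : ℤ) - 1))

lemma ediv_toNat_le (Y g D : ℤ) (m : ℕ) (hD : 0 < D) (hg0 : 0 ≤ g) (hgm : g ≤ m * D) :
    ((Y + g) / D).toNat ≤ m + (Y / D).toNat := by
  have h1 : (Y + g) / D ≤ (Y + m * D) / D := Int.ediv_le_ediv hD (by omega)
  have h2 : (Y + m * D) / D = Y / D + m := Int.add_mul_ediv_right _ _ (ne_of_gt hD)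
  omega

section
variable (p a : ℕ)

lemma cc_dvd (hp : p.Prime) (ha : 0 < a) :
    ∀ n b j, b < p ^ a → (p : ℤ) ^ (fexp p a n b j).toNat ∣ cc (p ^ a) n b j := by
  have hp1 : (1 : ℤ) < p := by exact_mod_cast hp.one_lt
  set D : ℤ := (p : ℤ) ^ (a - 1) * ((p : ℤ) - 1) with hDdef
  have hD : 0 < D := by
    apply mul_pos (pow_pos (by omega) _) (by omega)
  have hps : ((p : ℤ)) ^ a = (p : ℤ) ^ (a - 1) * p := by
    conv_lhs => rw [show a = (a - 1) + 1 by omega]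
    rw [pow_succ]
  have hqD : ((p : ℤ)) ^ a = D + (p : ℤ) ^ (a - 1) := by
    rw [hps, hDdef]; ring
  have hq1 : 1 ≤ p ^ a := Nat.one_le_pow _ _ hp.pos
  have hcastq : ((p ^ a : ℕ) : ℤ) = (p : ℤ) ^ a := by push_cast; ring
  have hcastq1 : ((p ^ a - 1 : ℕ) : ℤ) = (p : ℤ) ^ a - 1 := by
    push_cast [Nat.cast_sub hq1]; ring
  have hpa1D : (p : ℤ) ^ (a - 1) ≤ D := by
    rw [hDdef]
    nlinarith [pow_pos (show (0:ℤ) < p by omega) (a - 1)]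
  intro n
  induction n with
  | zero =>
    intro b j hb
    by_cases h : b = 0 ∧ j = 0
    · obtain ⟨rfl, rfl⟩ := h
      have h0 : fexp p a 0 0 0 = 0 := by
        unfold fexp
        rw [show ((0:ℕ):ℤ) - ((0:ℕ):ℤ) - ((0:ℕ):ℤ) * (p:ℤ)^a + (p:ℤ)^(a-1)*((p:ℤ)-1) - 1
            = ((p:ℤ)^(a-1)*((p:ℤ)-1)) - 1 by push_cast; ring]
        exact Int.ediv_eq_zero_of_lt (by omega) (by omega)
      rw [h0]
      simpa [cc] using one_dvd _
    · have : cc (p ^ a) 0 b j = 0 := by simp [cc, h]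
      rw [this]; exact dvd_zero _
  | succ n ih =>
    intro b j hb
    rcases b with _ | b
    · rcases j with _ | j
      · have : cc (p ^ a) (n + 1) 0 0 = 0 := rfl
        rw [this]; exact dvd_zero _
      · have hcc : cc (p ^ a) (n + 1) 0 (j + 1) = cc (p ^ a) n (p ^ a - 1) j := rfl
        have heq : (fexp p a (n + 1) 0 (j + 1)).toNat = (fexp p a n (p ^ a - 1) j).toNat := by
          unfold fexp
          rw [show ((n + 1 : ℕ) : ℤ) - ((0:ℕ):ℤ) - ((j + 1 : ℕ):ℤ) * (p:ℤ)^a + D - 1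
              = ((n : ℕ) : ℤ) - ((p ^ a - 1 : ℕ) : ℤ) - ((j : ℕ):ℤ) * (p:ℤ)^a + D - 1 by
            rw [hcastq1]; push_cast; ring]
        rw [hcc, heq]
        exact ih _ _ (by omega)
    · have hcc : cc (p ^ a) (n + 1) (b + 1) j
          = cc (p ^ a) n b j - ((p ^ a).choose (b + 1) : ℤ) * cc (p ^ a) n (p ^ a - 1) j := rfl
      rw [hcc]
      apply dvd_sub
      · have heq : (fexp p a (n + 1) (b + 1) j).toNat = (fexp p a n b j).toNat := by
          unfold fexp
          rw [show ((n + 1 : ℕ) : ℤ) - ((b + 1 : ℕ):ℤ) - ((j : ℕ):ℤ) * (p:ℤ)^a + D - 1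
              = ((n : ℕ) : ℤ) - ((b : ℕ) : ℤ) - ((j : ℕ):ℤ) * (p:ℤ)^a + D - 1 by
            push_cast; ring]
        rw [heq]
        exact ih _ _ (by omega)
      · -- the term with the binomial coefficient
        set e := (b + 1).factorization p with he
        have hpe_dvd : p ^ e ∣ (b + 1) := Nat.ordProj_dvd _ p
        have hpe_le : p ^ e ≤ b + 1 := Nat.le_of_dvd (by omega) hpe_dvd
        have hea : e < a := by
          by_contra h
          have : p ^ a ≤ p ^ e := Nat.pow_le_pow_right hp.pos (by omega)
          omega
        have hkum : ((p : ℤ)) ^ (a - e) ∣ ((p ^ a).choose (b + 1) : ℤ) := by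
          exact_mod_cast Int.natCast_dvd_natCast.mpr (kummer_dvd p hp a (b + 1) (by omega) hb)
        have h2 := ih (p ^ a - 1) j (by omega)
        have hmul : (p : ℤ) ^ ((a - e) + (fexp p a n (p ^ a - 1) j).toNat)
            ∣ ((p ^ a).choose (b + 1) : ℤ) * cc (p ^ a) n (p ^ a - 1) j := by
          rw [pow_add]; exact mul_dvd_mul hkum h2
        refine dvd_trans (pow_dvd_pow _ ?_) hmul
        -- exponent inequality
        set Y : ℤ := ((n : ℕ) : ℤ) - ((p ^ a - 1 : ℕ) : ℤ) - ((j : ℕ):ℤ) * (p:ℤ)^a + D - 1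
          with hY
        set g : ℤ := (p : ℤ) ^ a - 1 - (b : ℤ) with hg
        have hFY : fexp p a (n + 1) (b + 1) j = (Y + g) / D := by
          unfold fexp
          rw [show ((n + 1 : ℕ) : ℤ) - ((b + 1 : ℕ):ℤ) - ((j : ℕ):ℤ) * (p:ℤ)^a + D - 1
              = Y + g by rw [hY, hg, hcastq1]; push_cast; ring]
        have hFn : fexp p a n (p ^ a - 1) j = Y / D := by unfold fexp; rw [hY]
        have hbz : ((b : ℤ)) + 1 < (p : ℤ) ^ a := by exact_mod_cast hb
        have hg0 : 0 ≤ g := by rw [hg]; omega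
        rw [hFY, hFn]
        by_cases hcase : e = a - 1
        · -- a - e = 1, g ≤ D
          have hpe_cast : ((p ^ e : ℕ) : ℤ) = (p : ℤ) ^ (a - 1) := by
            rw [hcase]; push_cast; ring
          have hpeb : (p : ℤ) ^ (a - 1) ≤ (b : ℤ) + 1 := by
            rw [← hpe_cast]; exact_mod_cast hpe_le
          have hgD : g ≤ 1 * D := by
            rw [hg, one_mul]
            have : D = (p : ℤ) ^ a - (p : ℤ) ^ (a - 1) := by omega
            omega
          have := ediv_toNat_le Y g D 1 hD hg0 hgD
          omega
        · -- a - e ≥ 2, g ≤ 2 D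
          have hae2 : 2 ≤ a - e := by omega
          have hgD : g ≤ 2 * D := by
            rw [hg]
            have : (p : ℤ) ^ a = D + (p : ℤ) ^ (a - 1) := hqD
            omega
          have := ediv_toNat_le Y g D 2 hD hg0 hgD
          omega

end

lemma key_pow (q' : ℕ) : ((X : ℤ[X]) - 1) ^ (q' + 1) =
    (X ^ (q' + 1) - 1) - ∑ b ∈ range q', (((q' + 1).choose (b + 1) : ℤ[X])) * (X - 1) ^ (b + 1) := by
  have h1 := add_pow (X - 1 : ℤ[X]) 1 (q' + 1)
  simp only [one_pow, mul_one, sub_add_cancel] at h1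
  rw [sum_range_succ, sum_range_succ'] at h1
  simp only [pow_zero, one_mul, Nat.choose_zero_right, Nat.cast_one, Nat.choose_self] at h1
  have h2 : ∀ i ∈ range q', (X - 1 : ℤ[X]) ^ (i + 1) * ((q' + 1).choose (i + 1) : ℤ[X])
      = (((q' + 1).choose (i + 1) : ℤ[X])) * (X - 1) ^ (i + 1) := by
    intro i _; ring
  rw [Finset.sum_congr rfl h2] at h1
  linear_combination -h1

lemma cc_rep (q' : ℕ) (hq' : 1 ≤ q') (N : ℕ) :
    ∀ n, n ≤ N → ((X : ℤ[X]) - 1) ^ n =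
      ∑ b ∈ range (q' + 1), ∑ j ∈ range (N + 1),
        C (cc (q' + 1) n b j) * ((X ^ (q' + 1) - 1) ^ j * (X - 1) ^ b) := by
  intro n
  induction n with
  | zero =>
    intro _
    rw [Finset.sum_eq_single_of_mem 0 (mem_range.mpr (by omega))]
    · rw [Finset.sum_eq_single_of_mem 0 (mem_range.mpr (by omega))]
      · simp [cc]
      · intro j _ hj0
        have : cc (q' + 1) 0 0 j = 0 := by simp [cc, hj0]
        simp [this]
    · intro b _ hb0
      apply Finset.sum_eq_zero; intro j _
      have : cc (q' + 1) 0 b j = 0 := by simp [cc, hb0]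
      simp [this]
  | succ n ih =>
    intro hn
    have hn' : n ≤ N := by omega
    set t : ℤ[X] := X ^ (q' + 1) - 1 with ht
    set u : ℤ[X] := X - 1 with hu
    -- unfold cc at n+1 on the RHS
    have hsplit : ∑ b ∈ range (q' + 1), ∑ j ∈ range (N + 1),
          C (cc (q' + 1) (n + 1) b j) * (t ^ j * u ^ b)
        = (∑ b ∈ range q', ∑ j ∈ range (N + 1),
            C (cc (q' + 1) n b j) * (t ^ j * u ^ (b + 1)))
          - (∑ b ∈ range q', (((q' + 1).choose (b + 1) : ℤ[X]))
              * ((∑ j ∈ range (N + 1), C (cc (q' + 1) n q' j) * t ^ j) * u ^ (b + 1)))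
          + ∑ j ∈ range (N + 1), C (cc (q' + 1) (n + 1) 0 j) * t ^ j := by
      rw [sum_range_succ']
      have hbterm : ∀ b ∈ range q', ∑ j ∈ range (N + 1),
            C (cc (q' + 1) (n + 1) (b + 1) j) * (t ^ j * u ^ (b + 1))
          = (∑ j ∈ range (N + 1), C (cc (q' + 1) n b j) * (t ^ j * u ^ (b + 1)))
            - (((q' + 1).choose (b + 1) : ℤ[X]))
              * ((∑ j ∈ range (N + 1), C (cc (q' + 1) n q' j) * t ^ j) * u ^ (b + 1)) := by
        intro b _
        rw [sum_mul, Finset.mul_sum, ← Finset.sum_sub_distrib]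
        refine Finset.sum_congr rfl fun j _ => ?_
        have hcc : cc (q' + 1) (n + 1) (b + 1) j
            = cc (q' + 1) n b j - ((q' + 1).choose (b + 1) : ℤ) * cc (q' + 1) n q' j := rfl
        rw [hcc, map_sub, map_mul, Polynomial.C_eq_natCast]
        ring
      rw [Finset.sum_congr rfl hbterm, Finset.sum_sub_distrib]
      simp only [pow_zero, mul_one]
      try ring
    rw [hsplit]
    -- now the LHS
    rw [pow_succ, ih hn', sum_mul, sum_range_succ]
    have hbterm2 : ∀ b ∈ range q',
        (∑ j ∈ range (N + 1), C (cc (q' + 1) n b j) * (t ^ j * u ^ b)) * u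
          = ∑ j ∈ range (N + 1), C (cc (q' + 1) n b j) * (t ^ j * u ^ (b + 1)) := by
      intro b _
      rw [sum_mul]
      refine Finset.sum_congr rfl fun j _ => ?_
      ring
    rw [Finset.sum_congr rfl hbterm2]
    -- remaining: the b = q' layer
    have hkey : u ^ (q' + 1) = t - ∑ b ∈ range q',
        (((q' + 1).choose (b + 1) : ℤ[X])) * u ^ (b + 1) := key_pow q'
    have htop : (∑ j ∈ range (N + 1), C (cc (q' + 1) n q' j) * (t ^ j * u ^ q')) * u
        = (∑ j ∈ range (N + 1), C (cc (q' + 1) n q' j) * t ^ j) * u ^ (q' + 1) := by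
      rw [sum_mul, sum_mul]
      refine Finset.sum_congr rfl fun j _ => ?_
      ring
    rw [htop, hkey, mul_sub]
    -- t-part
    have htpart : (∑ j ∈ range (N + 1), C (cc (q' + 1) n q' j) * t ^ j) * t
        = ∑ j ∈ range (N + 1), C (cc (q' + 1) (n + 1) 0 j) * t ^ j := by
      rw [sum_mul]
      conv_rhs => rw [sum_range_succ']
      have h00 : cc (q' + 1) (n + 1) 0 0 = 0 := rfl
      have h0j : ∀ j, cc (q' + 1) (n + 1) 0 (j + 1) = cc (q' + 1) n q' j := fun j => rfl
      rw [sum_range_succ]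
      have hNz : cc (q' + 1) n q' N = 0 := cc_eq_zero _ _ _ _ (by omega)
      simp only [h00, h0j, hNz, map_zero, zero_mul, mul_one, add_zero, pow_zero]
      refine Finset.sum_congr rfl fun j _ => ?_
      ring
    rw [htpart]
    -- the subtracted sums
    have hsub : (∑ j ∈ range (N + 1), C (cc (q' + 1) n q' j) * t ^ j)
          * (∑ b ∈ range q', (((q' + 1).choose (b + 1) : ℤ[X])) * u ^ (b + 1))
        = ∑ b ∈ range q', (((q' + 1).choose (b + 1) : ℤ[X]))
            * ((∑ j ∈ range (N + 1), C (cc (q' + 1) n q' j) * t ^ j) * u ^ (b + 1)) := by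
      rw [Finset.mul_sum]
      refine Finset.sum_congr rfl fun b _ => ?_
      ring
    rw [hsub]
    ring

lemma fd_aux (h : ℕ → ℤ) (j' : ℕ) :
    ∑ i ∈ range (j' + 2), (-1 : ℤ) ^ (j' + 1 - i) * ((j' + 1).choose i : ℤ) * h i
      = (∑ i ∈ range (j' + 1), (-1 : ℤ) ^ (j' - i) * (j'.choose i : ℤ) * h (i + 1))
        - ∑ i ∈ range (j' + 1), (-1 : ℤ) ^ (j' - i) * (j'.choose i : ℤ) * h i := by
  rw [sum_range_succ']
  have e1 : ∀ i ∈ range (j' + 1),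
      (-1 : ℤ) ^ (j' + 1 - (i + 1)) * ((j' + 1).choose (i + 1) : ℤ) * h (i + 1)
        = (-1 : ℤ) ^ (j' - i) * (j'.choose i : ℤ) * h (i + 1)
          + (-1 : ℤ) ^ (j' - i) * (j'.choose (i + 1) : ℤ) * h (i + 1) := by
    intro i _
    rw [show j' + 1 - (i + 1) = j' - i by omega, Nat.choose_succ_succ]
    push_cast; ring
  rw [Finset.sum_congr rfl e1, Finset.sum_add_distrib]
  have e2 : ∑ i ∈ range (j' + 1), (-1 : ℤ) ^ (j' - i) * (j'.choose (i + 1) : ℤ) * h (i + 1)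
      = (∑ i ∈ range (j' + 2), (-1 : ℤ) ^ (j' + 1 - i) * (j'.choose i : ℤ) * h i)
        - (-1 : ℤ) ^ (j' + 1) * (j'.choose 0 : ℤ) * h 0 := by
    conv_rhs => rw [sum_range_succ']
    have : ∀ i ∈ range (j' + 1),
        (-1 : ℤ) ^ (j' + 1 - (i + 1)) * (j'.choose (i + 1) : ℤ) * h (i + 1)
          = (-1 : ℤ) ^ (j' - i) * (j'.choose (i + 1) : ℤ) * h (i + 1) := by
      intro i _
      rw [show j' + 1 - (i + 1) = j' - i by omega]
    rw [Finset.sum_congr rfl this]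
    rw [show j' + 1 - 0 = j' + 1 by omega, pow_succ]
    ring
  have e3 : ∑ i ∈ range (j' + 2), (-1 : ℤ) ^ (j' + 1 - i) * (j'.choose i : ℤ) * h i
      = - ∑ i ∈ range (j' + 1), (-1 : ℤ) ^ (j' - i) * (j'.choose i : ℤ) * h i := by
    rw [sum_range_succ, Nat.choose_succ_self]
    rw [← Finset.sum_neg_distrib]
    have : ∀ i ∈ range (j' + 1),
        (-1 : ℤ) ^ (j' + 1 - i) * (j'.choose i : ℤ) * h i
          = -((-1 : ℤ) ^ (j' - i) * (j'.choose i : ℤ) * h i) := by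
      intro i hi
      rw [show j' + 1 - i = (j' - i) + 1 by simp at hi; omega, pow_succ]
      ring
    rw [Finset.sum_congr rfl this]
    simp
  rw [e2, e3]
  simp [Nat.choose_zero_right]
  ring

lemma fd (j : ℕ) : ∀ (j' : ℕ) (s : ℤ),
    ∑ i ∈ range (j' + 1), (-1 : ℤ) ^ (j' - i) * (j'.choose i : ℤ) * Ring.choose (s + (i : ℤ)) j
      = if j' ≤ j then Ring.choose s (j - j') else 0 := by
  intro j'
  induction j' with
  | zero =>
    intro s
    simp
  | succ j' ih =>
    intro s
    have haux := fd_aux (fun i => Ring.choose (s + (i : ℤ)) j) j'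
    rw [show j' + 1 + 1 = j' + 2 from rfl] at *
    rw [haux]
    have hsh : ∀ i ∈ range (j' + 1),
        (-1 : ℤ) ^ (j' - i) * (j'.choose i : ℤ) * Ring.choose (s + ((i + 1 : ℕ) : ℤ)) j
          = (-1 : ℤ) ^ (j' - i) * (j'.choose i : ℤ) * Ring.choose ((s + 1) + (i : ℤ)) j := by
      intro i _
      congr 1
      push_cast
      ring_nf
    rw [Finset.sum_congr rfl hsh, ih (s + 1), ih s]
    by_cases h1 : j' + 1 ≤ j
    · rw [if_pos h1, if_pos (by omega), if_pos (by omega)]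
      rw [show j - j' = (j - (j' + 1)) + 1 by omega]
      rw [show s + 1 = s + 1 from rfl]
      rw [Ring.choose_succ_succ]
      ring
    · by_cases h2 : j' ≤ j
      · have hj : j' = j := by omega
        rw [if_neg h1, if_pos h2, if_pos h2, hj]
        simp [Ring.choose_zero_right]
      · rw [if_neg h1, if_neg h2, if_neg h2]
        ring

/-- The evaluation function. -/
def gfun (q : ℕ) (r : ℤ) (j : ℕ) (k : ℕ) : ℤ :=
  if (q : ℤ) ∣ ((k : ℤ) - r) then Ring.choose (((k : ℤ) - r) / q) j else 0

/-- The linear functional on polynomials. -/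
def lam (q : ℕ) (r : ℤ) (j M : ℕ) (P : Polynomial ℤ) : ℤ :=
  ∑ k ∈ range (M + 1), P.coeff k * gfun q r j k

lemma lam_sum {ι : Type*} (q : ℕ) (r : ℤ) (j M : ℕ) (s : Finset ι) (F : ι → Polynomial ℤ) :
    lam q r j M (∑ i ∈ s, F i) = ∑ i ∈ s, lam q r j M (F i) := by
  unfold lam
  simp only [Polynomial.finset_sum_coeff, Finset.sum_mul]
  exact Finset.sum_comm

lemma lam_C_mul (q : ℕ) (r : ℤ) (j M : ℕ) (z : ℤ) (P : Polynomial ℤ) :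
    lam q r j M (Polynomial.C z * P) = z * lam q r j M P := by
  unfold lam
  simp only [Polynomial.coeff_C_mul, Finset.mul_sum, mul_assoc]

lemma lam_monomial (q : ℕ) (r : ℤ) (j M : ℕ) (z : ℤ) (k : ℕ) (hk : k ≤ M) :
    lam q r j M (Polynomial.C z * Polynomial.X ^ k) = z * gfun q r j k := by
  unfold lam
  simp only [Polynomial.coeff_C_mul, Polynomial.coeff_X_pow]
  rw [Finset.sum_eq_single_of_mem k (mem_range.mpr (by omega))]
  · simp
  · intro b _ hb
    simp [hb]

lemma gfun_eval (q : ℕ) (hq : 0 < q) (r : ℤ) (j : ℕ) (i' i : ℕ) (hi : i < q) :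
    gfun q r j (q * i' + i)
      = if (i : ℤ) = r % q then Ring.choose (-(r / q) + (i' : ℤ)) j else 0 := by
  have hq0 : (q : ℤ) ≠ 0 := by exact_mod_cast hq.ne'
  have hsplit : ((q * i' + i : ℕ) : ℤ) - r = (i : ℤ) - r + (i' : ℤ) * q := by push_cast; ring
  unfold gfun
  rw [hsplit]
  have hdvd : (q : ℤ) ∣ ((i : ℤ) - r + (i' : ℤ) * q) ↔ (q : ℤ) ∣ ((i : ℤ) - r) := by
    constructor
    · intro h
      have := dvd_sub h (Dvd.intro_left (i' : ℤ) rfl)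
      simpa using this
    · intro h
      exact dvd_add h (Dvd.intro_left (i' : ℤ) rfl)
  have hcond : ((q : ℤ) ∣ ((i : ℤ) - r)) ↔ (i : ℤ) = r % q := by
    constructor
    · intro h
      have hmod : (i : ℤ) % q = r % q := Int.ModEq.symm (Int.modEq_iff_dvd.mpr h)
      rwa [Int.emod_eq_of_lt (by positivity) (by exact_mod_cast hi)] at hmod
    · intro h
      rw [h]
      have : r % q - r = -(q * (r / q)) := by
        rw [Int.emod_def]; ring
      rw [this]
      exact Dvd.dvd.neg_right (Dvd.intro _ rfl)
  by_cases hc : (i : ℤ) = r % q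
  · rw [if_pos ((hdvd.trans hcond).mpr hc), if_pos hc]
    congr 1
    rw [hc]
    have : r % q - r + (i' : ℤ) * q = ((- (r / q)) + i') * q := by
      rw [Int.emod_def]; ring
    rw [this, Int.mul_ediv_cancel _ hq0]
  · rw [if_neg (fun h => hc (hcond.mp (hdvd.mp h))), if_neg hc]

lemma lam_pow (q : ℕ) (hq : 0 < q) (r : ℤ) (j M : ℕ) (b j' : ℕ) (hb : b < q)
    (hM : q * j' + b ≤ M) :
    lam q r j M ((Polynomial.X ^ q - 1) ^ j' * (Polynomial.X - 1) ^ b)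
      = (if (r % q).toNat ≤ b then
            (-1 : ℤ) ^ (b - (r % q).toNat) * (b.choose (r % q).toNat : ℤ) else 0)
        * (if j' ≤ j then Ring.choose (-(r / q)) (j - j') else 0) := by
  have hexp1 : (Polynomial.X ^ q - 1 : Polynomial ℤ) ^ j'
      = ∑ i' ∈ range (j' + 1), (Polynomial.X ^ q) ^ i' * (-1 : Polynomial ℤ) ^ (j' - i')
          * ((j'.choose i' : ℕ) : Polynomial ℤ) := by
    rw [sub_eq_add_neg, add_pow]
  have hexp2 : (Polynomial.X - 1 : Polynomial ℤ) ^ b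
      = ∑ i ∈ range (b + 1), Polynomial.X ^ i * (-1 : Polynomial ℤ) ^ (b - i)
          * ((b.choose i : ℕ) : Polynomial ℤ) := by
    rw [sub_eq_add_neg, add_pow]
  rw [hexp1, hexp2, Finset.sum_mul_sum]
  have hterm : ∀ i' ∈ range (j' + 1), ∀ i ∈ range (b + 1),
      ((Polynomial.X ^ q) ^ i' * (-1 : Polynomial ℤ) ^ (j' - i') * ((j'.choose i' : ℕ) : Polynomial ℤ))
        * (Polynomial.X ^ i * (-1 : Polynomial ℤ) ^ (b - i) * ((b.choose i : ℕ) : Polynomial ℤ))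
      = Polynomial.C ((-1 : ℤ) ^ (j' - i') * (j'.choose i' : ℤ)
          * ((-1 : ℤ) ^ (b - i) * (b.choose i : ℤ))) * Polynomial.X ^ (q * i' + i) := by
    intro i' _ i _
    rw [← pow_mul]
    simp only [map_mul, map_pow, map_neg, map_one, Polynomial.C_eq_natCast]
    ring
  rw [Finset.sum_congr rfl (fun i' hi' => Finset.sum_congr rfl (hterm i' hi'))]
  rw [lam_sum]
  have hlam : ∀ i' ∈ range (j' + 1),
      lam q r j M (∑ i ∈ range (b + 1),
        Polynomial.C ((-1 : ℤ) ^ (j' - i') * (j'.choose i' : ℤ)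
          * ((-1 : ℤ) ^ (b - i) * (b.choose i : ℤ))) * Polynomial.X ^ (q * i' + i))
      = (-1 : ℤ) ^ (j' - i') * (j'.choose i' : ℤ)
        * ∑ i ∈ range (b + 1), ((-1 : ℤ) ^ (b - i) * (b.choose i : ℤ)) * gfun q r j (q * i' + i) := by
    intro i' hi'
    rw [lam_sum, Finset.mul_sum]
    refine Finset.sum_congr rfl fun i hi => ?_
    rw [lam_monomial]
    · ring
    · simp only [mem_range] at hi' hi
      have h1 : i' ≤ j' := by omega
      have h2 : i ≤ b := by omega
      have := Nat.mul_le_mul_left q h1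
      omega
  rw [Finset.sum_congr rfl hlam]
  -- evaluate the inner sum
  set r0 : ℕ := (r % q).toNat with hr0
  have hr0eq : ((r0 : ℕ) : ℤ) = r % q := by
    rw [hr0]
    exact Int.toNat_of_nonneg (Int.emod_nonneg r (by exact_mod_cast hq.ne'))
  have hinner : ∀ i' ∈ range (j' + 1),
      ∑ i ∈ range (b + 1), ((-1 : ℤ) ^ (b - i) * (b.choose i : ℤ)) * gfun q r j (q * i' + i)
        = (if r0 ≤ b then (-1 : ℤ) ^ (b - r0) * (b.choose r0 : ℤ) else 0)
          * Ring.choose (-(r / q) + (i' : ℤ)) j := by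
    intro i' _
    have : ∀ i ∈ range (b + 1),
        ((-1 : ℤ) ^ (b - i) * (b.choose i : ℤ)) * gfun q r j (q * i' + i)
          = if i = r0 then ((-1 : ℤ) ^ (b - i) * (b.choose i : ℤ))
              * Ring.choose (-(r / q) + (i' : ℤ)) j else 0 := by
      intro i hi
      rw [gfun_eval q hq r j i' i (by simp only [mem_range] at hi; omega)]
      have hiff : ((i : ℤ) = r % q) ↔ i = r0 := by
        rw [← hr0eq]
        exact Nat.cast_inj
      by_cases hc : i = r0
      · rw [if_pos (hiff.mpr hc), if_pos hc]
      · rw [if_neg (fun h => hc (hiff.mp h)), if_neg hc]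
        rw [mul_zero]
    rw [Finset.sum_congr rfl this, Finset.sum_ite_eq' (range (b + 1)) r0]
    by_cases hc : r0 ≤ b
    · rw [if_pos (mem_range.mpr (by omega)), if_pos hc]
    · rw [if_neg (by simp [mem_range]; omega), if_neg hc, zero_mul]
  have hcomb : ∀ i' ∈ range (j' + 1),
      (-1 : ℤ) ^ (j' - i') * (j'.choose i' : ℤ)
        * ∑ i ∈ range (b + 1), ((-1 : ℤ) ^ (b - i) * (b.choose i : ℤ)) * gfun q r j (q * i' + i)
      = (if r0 ≤ b then (-1 : ℤ) ^ (b - r0) * (b.choose r0 : ℤ) else 0)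
        * ((-1 : ℤ) ^ (j' - i') * (j'.choose i' : ℤ) * Ring.choose (-(r / q) + (i' : ℤ)) j) := by
    intro i' hi'
    rw [hinner i' hi']
    ring
  rw [Finset.sum_congr rfl hcomb, ← Finset.mul_sum, fd j j' (-(r / q))]


/-- **Sharp Congruence I for `ψ^a`** (Theorem 1.3).  For a prime `p`, positive integers
`a` and `n`, an integer `r` and `j ≥ 0`, the sum
`∑_{k ≡ r mod p^a} (-1)^(n-k) C(n,k) C((k-r)/p^a, j)` is divisible by
`p^[(n - p^(a-1) - j p^a)/(p^(a-1)(p-1))]`, where `[x]` is the floor of `x` when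
`x ≥ 0` and `0` otherwise. -/
theorem weisman_type_congruence (p : ℕ) (hp : p.Prime) (a n : ℕ) (ha : 0 < a) (hn : 0 < n)
    (r : ℤ) (j : ℕ) :
    (p : ℤ) ^ ((((n : ℤ) - (p : ℤ) ^ (a - 1) - j * (p : ℤ) ^ a) /
        ((p : ℤ) ^ (a - 1) * ((p : ℤ) - 1))).toNat) ∣
      ∑ k ∈ (Finset.range (n + 1)).filter (fun k : ℕ => (k : ℤ) ≡ r [ZMOD ((p : ℤ) ^ a)]),
        (-1) ^ (n - k) * (n.choose k : ℤ) * Ring.choose (((k : ℤ) - r) / (p : ℤ) ^ a) j := by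
  have hp2 : 2 ≤ p := hp.two_le
  set q : ℕ := p ^ a with hqdef
  have hq2 : 2 ≤ q := by
    calc 2 ≤ p := hp2
    _ = p ^ 1 := (pow_one p).symm
    _ ≤ p ^ a := Nat.pow_le_pow_right (by omega) ha
  have hq0 : 0 < q := by omega
  have hcastq : ((q : ℕ) : ℤ) = (p : ℤ) ^ a := by rw [hqdef]; push_cast; ring
  set M : ℕ := q * n + q with hMdef
  set D : ℤ := (p : ℤ) ^ (a - 1) * ((p : ℤ) - 1) with hDdef
  have hp1 : (1 : ℤ) < (p : ℤ) := by exact_mod_cast hp2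
  have hD : 0 < D := mul_pos (pow_pos (by omega) _) (by omega)
  have hps : ((p : ℤ)) ^ a = (p : ℤ) ^ (a - 1) * p := by
    conv_lhs => rw [show a = (a - 1) + 1 by omega]
    rw [pow_succ]
  have hqD : ((p : ℤ)) ^ a = D + (p : ℤ) ^ (a - 1) := by rw [hps, hDdef]; ring
  -- Step 1 : lam of (X-1)^n
  have hLexp : ((Polynomial.X : Polynomial ℤ) - 1) ^ n
      = ∑ k ∈ range (n + 1),
          Polynomial.C ((-1 : ℤ) ^ (n - k) * (n.choose k : ℤ)) * Polynomial.X ^ k := by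
    rw [sub_eq_add_neg, add_pow]
    refine Finset.sum_congr rfl fun k _ => ?_
    simp only [map_mul, map_pow, map_neg, map_one, Polynomial.C_eq_natCast]
    ring
  have hL : lam q r j M (((Polynomial.X : Polynomial ℤ) - 1) ^ n)
      = ∑ k ∈ range (n + 1), (-1 : ℤ) ^ (n - k) * (n.choose k : ℤ) * gfun q r j k := by
    rw [hLexp, lam_sum]
    refine Finset.sum_congr rfl fun k hk => ?_
    rw [lam_monomial q r j M _ k (by
      simp only [mem_range] at hk
      have h2 : n ≤ q * n := Nat.le_mul_of_pos_left n hq0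
      omega)]
  -- Step 2 : the target sum equals the gfun-sum
  have hS : (∑ k ∈ (Finset.range (n + 1)).filter
        (fun k : ℕ => (k : ℤ) ≡ r [ZMOD ((p : ℤ) ^ a)]),
        (-1 : ℤ) ^ (n - k) * (n.choose k : ℤ) * Ring.choose (((k : ℤ) - r) / (p : ℤ) ^ a) j)
      = ∑ k ∈ range (n + 1), (-1 : ℤ) ^ (n - k) * (n.choose k : ℤ) * gfun q r j k := by
    rw [Finset.sum_filter]
    refine Finset.sum_congr rfl fun k _ => ?_
    unfold gfun
    rw [hcastq]
    by_cases hc : (k : ℤ) ≡ r [ZMOD ((p : ℤ) ^ a)]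
    · rw [if_pos hc, if_pos (dvd_sub_comm.mp (Int.ModEq.dvd hc))]
    · have hnd : ¬ ((p : ℤ) ^ a ∣ (k : ℤ) - r) :=
        fun h => hc (Int.modEq_iff_dvd.mpr (dvd_sub_comm.mp h))
      rw [if_neg hc, if_neg hnd, mul_zero]
  -- Step 3 : lam of the representation
  have hq'1 : (q - 1) + 1 = q := by omega
  have hrep := cc_rep (q - 1) (by omega) n n le_rfl
  rw [hq'1] at hrep
  have hR : lam q r j M (∑ b ∈ range q, ∑ j' ∈ range (n + 1),
        Polynomial.C (cc q n b j') * ((Polynomial.X ^ q - 1) ^ j' * (Polynomial.X - 1) ^ b))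
      = ∑ b ∈ range q, ∑ j' ∈ range (n + 1), cc q n b j' *
          ((if (r % q).toNat ≤ b then
              (-1 : ℤ) ^ (b - (r % q).toNat) * (b.choose (r % q).toNat : ℤ) else 0)
            * (if j' ≤ j then Ring.choose (-(r / q)) (j - j') else 0)) := by
    rw [lam_sum]
    refine Finset.sum_congr rfl fun b hb => ?_
    rw [lam_sum]
    refine Finset.sum_congr rfl fun j' hj' => ?_
    simp only [mem_range] at hb hj'
    rw [lam_C_mul, lam_pow q hq0 r j M b j' hb]
    have h1 : j' ≤ n := by omega
    have := Nat.mul_le_mul_left q h1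
    omega
  -- combine
  have hkey : (∑ k ∈ (Finset.range (n + 1)).filter
        (fun k : ℕ => (k : ℤ) ≡ r [ZMOD ((p : ℤ) ^ a)]),
        (-1 : ℤ) ^ (n - k) * (n.choose k : ℤ) * Ring.choose (((k : ℤ) - r) / (p : ℤ) ^ a) j)
      = ∑ b ∈ range q, ∑ j' ∈ range (n + 1), cc q n b j' *
          ((if (r % q).toNat ≤ b then
              (-1 : ℤ) ^ (b - (r % q).toNat) * (b.choose (r % q).toNat : ℤ) else 0)
            * (if j' ≤ j then Ring.choose (-(r / q)) (j - j') else 0)) := by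
    rw [hS, ← hL, hrep, hR]
  rw [hkey]
  -- divisibility
  apply Finset.dvd_sum
  intro b hb
  apply Finset.dvd_sum
  intro j' hj'
  by_cases hjj : j' ≤ j
  · have hdvd_cc : (p : ℤ) ^ (fexp p a n b j').toNat ∣ cc q n b j' :=
      cc_dvd p a hp ha n b j' (mem_range.mp hb)
    have hble : (b : ℤ) ≤ (p : ℤ) ^ a - 1 := by
      have := mem_range.mp hb
      have : (b : ℤ) < ((q : ℕ) : ℤ) := by exact_mod_cast this
      omega
    have hle : (((n : ℤ) - (p : ℤ) ^ (a - 1) - j * (p : ℤ) ^ a) / D).toNat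
        ≤ (fexp p a n b j').toNat := by
      apply Int.toNat_le_toNat
      unfold fexp
      rw [← hDdef]
      apply Int.ediv_le_ediv hD
      have hmul : (j' : ℤ) * (p : ℤ) ^ a ≤ (j : ℤ) * (p : ℤ) ^ a :=
        mul_le_mul_of_nonneg_right (by exact_mod_cast hjj) (by positivity)
      omega
    exact dvd_mul_of_dvd_left ((pow_dvd_pow _ hle).trans hdvd_cc) _
  · rw [if_neg hjj, mul_zero, mul_zero]
    exact dvd_zero _
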